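/- Let U, V be Hilbert spaces, B* : V → U linear with ‖B*v‖_U = ‖v‖_V for all v ∈ V, and b(u,v) := (u, B*v)_U. Let V_δ ⊆ V be a finite-dimensional subspace and define U_δ := B*(V_δ). Then the discrete inf-sup constant β_δ := inf_{u_δ ∈ U_δ, u_δ≠0} sup_{v_δ ∈ V_δ, v_δ≠0} b(u_δ, v_δ)/(‖u_δ‖_U ‖v_δ‖_V) equals 1. -/
import Mathlib


open RealInnerProductSpace

lemma inner_preserved {U V : Type*}
    [NormedAddCommGroup U] [InnerProductSpace ℝ U]
    [NormedAddCommGroup V] [InnerProductSpace ℝ V]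
    (Bs : V →ₗ[ℝ] U) (hIso : ∀ v : V, ‖Bs v‖ = ‖v‖) (x y : V) :
    ⟪Bs x, Bs y⟫ = ⟪x, y⟫ := by
  rw [real_inner_eq_norm_add_mul_self_sub_norm_mul_self_sub_norm_mul_self_div_two,
    real_inner_eq_norm_add_mul_self_sub_norm_mul_self_sub_norm_mul_self_div_two (x := x),
    ← map_add, hIso, hIso, hIso]

/-- Discrete inf-sup stability: with `U_δ := B*(V_δ)` for a finite-dimensional test
space `V_δ`, the discrete inf-sup constant equals 1. -/
theorem discrete_infsup {U V : Type*}
    [NormedAddCommGroup U] [InnerProductSpace ℝ U] [CompleteSpace U]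
    [NormedAddCommGroup V] [InnerProductSpace ℝ V] [CompleteSpace V]
    (Bs : V →ₗ[ℝ] U) (hIso : ∀ v : V, ‖Bs v‖ = ‖v‖)
    (b : U → V → ℝ) (hb : ∀ u v, b u v = ⟪u, Bs v⟫)
    (Vd : Submodule ℝ V) [FiniteDimensional ℝ Vd] (hVd : Vd ≠ ⊥)
    (Ud : Submodule ℝ U) (hUd : Ud = Vd.map Bs) :
    (⨅ u : {u : U // u ∈ Ud ∧ u ≠ 0}, ⨆ v : {v : V // v ∈ Vd ∧ v ≠ 0},
      b u.1 v.1 / (‖u.1‖ * ‖v.1‖)) = 1 := by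
  -- nonempty test index
  obtain ⟨w0, hw0, hw0ne⟩ := Submodule.exists_mem_ne_zero_of_ne_bot hVd
  haveI hVne : Nonempty {v : V // v ∈ Vd ∧ v ≠ 0} := ⟨⟨w0, hw0, hw0ne⟩⟩
  haveI hUne : Nonempty {u : U // u ∈ Ud ∧ u ≠ 0} := by
    refine ⟨⟨Bs w0, ?_, ?_⟩⟩
    · rw [hUd]; exact ⟨w0, hw0, rfl⟩
    · intro h
      apply hw0ne
      have := hIso w0
      rw [h, norm_zero] at this
      exact norm_eq_zero.mp this.symm
  have key : ∀ u : {u : U // u ∈ Ud ∧ u ≠ 0},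
      (⨆ v : {v : V // v ∈ Vd ∧ v ≠ 0}, b u.1 v.1 / (‖u.1‖ * ‖v.1‖)) = 1 := by
    rintro ⟨u, hu, hune⟩
    rw [hUd] at hu
    obtain ⟨w, hw, rfl⟩ := hu
    have hwne : w ≠ 0 := fun h => hune (by simp [h])
    have hwpos : (0:ℝ) < ‖w‖ := norm_pos_iff.mpr hwne
    apply le_antisymm
    · apply ciSup_le
      rintro ⟨v, hv, hvne⟩
      have hvpos : (0:ℝ) < ‖v‖ := norm_pos_iff.mpr hvne
      rw [hb, inner_preserved Bs hIso, hIso]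
      rw [div_le_one (by positivity)]
      simpa using real_inner_le_norm w v
    · have hb1 : BddAbove (Set.range fun v : {v : V // v ∈ Vd ∧ v ≠ 0} =>
          b (Bs w) v.1 / (‖Bs w‖ * ‖v.1‖)) := by
        refine ⟨1, ?_⟩
        rintro x ⟨⟨v, hv, hvne⟩, rfl⟩
        have hvpos : (0:ℝ) < ‖v‖ := norm_pos_iff.mpr hvne
        simp only
        rw [hb, inner_preserved Bs hIso, hIso, div_le_one (by positivity)]
        simpa using real_inner_le_norm w v
      have := le_ciSup hb1 ⟨w, hw, hwne⟩
      refine le_trans ?_ this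
      rw [hb, inner_preserved Bs hIso, hIso, real_inner_self_eq_norm_mul_norm,
        div_self (by positivity)]
  simp only [key]
  exact ciInf_const
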